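/- arXiv:2604.13431 — 8 statements merged into one kernel-verified Lean document; each statement's English description precedes it below -/
import Mathlib

section
/- Let M ∈ F^{r×k} be full-rank with r ≤ k, let I be the set produced by the decreasing-index greedy column-selection procedure, and let w_1 > w_2 > ... > w_k be integers. Then for every J ⊆ [k] of size r with M_J nonsingular, Σ_{i∈I} w_i ≤ Σ_{i∈J} w_i, with equality if and only if I = J. -/
open Classical in
/-- The greedy column-selection procedure: process column indices of `M` in
decreasing order, adding index `i` to the current set `I` whenever the `i`-th
column of `M` does not lie in the span of the columns indexed by `I`. -/
noncomputable def greedySet {F : Type*} [Field F] {r k : ℕ}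
    (M : Matrix (Fin r) (Fin k) F) : Finset (Fin k) :=
  ((List.finRange k).reverse).foldl
    (fun I i =>
      if (fun a => M a i) ∈
          Submodule.span F ((fun j (a : Fin r) => M a j) '' (I : Set (Fin k)))
      then I else insert i I) ∅


open Finset Submodule

namespace GreedyAux

variable {F : Type*} [Field F] {r k : ℕ}

lemma li_mono {v : Fin k → Fin r → F} {S T : Finset (Fin k)} (hST : S ⊆ T)
    (h : LinearIndependent F fun x : (T : Set (Fin k)) => v x) :
    LinearIndependent F fun x : (S : Set (Fin k)) => v x :=
  h.comp (Set.inclusion (by exact_mod_cast hST)) (Set.inclusion_injective _)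

lemma card_eq_finrank {v : Fin k → Fin r → F} {S : Finset (Fin k)}
    (h : LinearIndependent F fun x : (S : Set (Fin k)) => v x) :
    Module.finrank F (Submodule.span F (v '' (S : Set (Fin k)))) = S.card := by
  rw [Set.image_eq_range, finrank_span_eq_card h]
  simp


lemma greedy_spec (v : Fin k → Fin r → F)
    (f : Finset (Fin k) → Fin k → Finset (Fin k))
    (hf : ∀ (I : Finset (Fin k)) (i : Fin k), (v i ∈ Submodule.span F (v '' (I : Set (Fin k))) ∧ f I i = I) ∨
      (v i ∉ Submodule.span F (v '' (I : Set (Fin k))) ∧ f I i = insert i I)) :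
    ∀ l : List (Fin k), l.Pairwise (· > ·) →
      (∀ j ∈ List.foldl f ∅ l, j ∈ l) ∧
      (LinearIndependent F fun x : ((List.foldl f ∅ l : Finset (Fin k)) : Set (Fin k)) => v x) ∧
      ∀ i ∈ l, v i ∈ Submodule.span F
        (v '' (((List.foldl f ∅ l).filter (fun j => i ≤ j) : Finset (Fin k)) : Set (Fin k))) := by
  intro l
  induction l using List.reverseRecOn with
  | nil =>
    intro _
    refine ⟨by simp, ?_, by simp⟩
    simp only [List.foldl_nil]
    haveI : IsEmpty ((((∅ : Finset (Fin k))) : Set (Fin k))) := ⟨fun x => by simpa using x.2⟩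
    exact linearIndependent_empty_type
  | append_singleton l a ih =>
    intro hp
    rw [List.pairwise_append] at hp
    obtain ⟨hpl, -, hla⟩ := hp
    have hla' : ∀ x ∈ l, a < x := fun x hx => hla x hx a (List.mem_singleton_self a)
    obtain ⟨hmem, hli, hspan⟩ := ih hpl
    set G := List.foldl f ∅ l with hG
    have hfold : List.foldl f ∅ (l ++ [a]) = f G a := by
      rw [List.foldl_append, List.foldl_cons, List.foldl_nil]
    rw [hfold]
    have haG : a ∉ G := fun h => lt_irrefl a (hla' a (hmem a h))
    have hGgt : ∀ j ∈ G, a < j := fun j hj => hla' j (hmem j hj)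
    rcases hf G a with ⟨hc, he⟩ | ⟨hc, he⟩
    · rw [he]
      refine ⟨fun j hj => List.mem_append_left _ (hmem j hj), hli, ?_⟩
      intro i hi
      rcases List.mem_append.mp hi with hi | hi
      · exact hspan i hi
      · rw [List.mem_singleton] at hi
        subst hi
        have : G.filter (fun j => i ≤ j) = G :=
          Finset.filter_true_of_mem (fun j hj => (hGgt j hj).le)
        rw [this]
        exact hc
    · rw [he]
      have haG' : a ∉ (G : Set (Fin k)) := by exact_mod_cast haG
      refine ⟨?_, ?_, ?_⟩
      · intro j hj
        rcases Finset.mem_insert.mp hj with rfl | hj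
        · exact List.mem_append_right _ (List.mem_singleton_self _)
        · exact List.mem_append_left _ (hmem j hj)
      · rw [Finset.coe_insert]
        exact (linearIndepOn_insert haG').mpr ⟨hli, hc⟩
      · intro i hi
        rcases List.mem_append.mp hi with hi | hi
        · have hai : a < i := hla' i hi
          have : (insert a G).filter (fun j => i ≤ j) = G.filter (fun j => i ≤ j) := by
            rw [Finset.filter_insert, if_neg (not_le.mpr hai)]
          rw [this]
          exact hspan i hi
        · rw [List.mem_singleton] at hi
          subst hi
          apply Submodule.subset_span
          exact Set.mem_image_of_mem v (by
            simp only [Finset.coe_filter, Set.mem_setOf_eq]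
            exact ⟨Finset.mem_insert_self _ _, le_refl _⟩)


lemma counts {v : Fin k → Fin r → F} {G J : Finset (Fin k)}
    (hli : LinearIndependent F fun x : (G : Set (Fin k)) => v x)
    (hspan : ∀ i : Fin k, v i ∈ Submodule.span F
      (v '' ((G.filter (fun j => i ≤ j) : Finset (Fin k)) : Set (Fin k))))
    (hJli : LinearIndependent F fun x : (J : Set (Fin k)) => v x) (t : Fin k) :
    (J.filter (fun j => t ≤ j)).card ≤ (G.filter (fun j => t ≤ j)).card := by
  rw [← card_eq_finrank (li_mono (Finset.filter_subset _ _) hJli),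
      ← card_eq_finrank (li_mono (Finset.filter_subset _ _) hli)]
  apply Submodule.finrank_mono
  rw [Submodule.span_le]
  rintro x ⟨i, hi, rfl⟩
  simp only [Finset.coe_filter, Set.mem_setOf_eq] at hi
  obtain ⟨hiJ, hti⟩ := hi
  refine Submodule.span_mono (Set.image_mono ?_) (hspan i)
  exact_mod_cast Finset.monotone_filter_right G (fun j _ hj => le_trans hti hj)

lemma card_greedy {v : Fin k → Fin r → F} {G : Finset (Fin k)}
    (hli : LinearIndependent F fun x : (G : Set (Fin k)) => v x)
    (hspan : ∀ i : Fin k, v i ∈ Submodule.span F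
      (v '' ((G.filter (fun j => i ≤ j) : Finset (Fin k)) : Set (Fin k))))
    (hrank : Module.finrank F (Submodule.span F (Set.range v)) = r) :
    G.card = r := by
  have hspaneq : Submodule.span F (v '' (G : Set (Fin k))) = Submodule.span F (Set.range v) := by
    apply le_antisymm
    · exact Submodule.span_mono (Set.image_subset_range _ _)
    · rw [Submodule.span_le]
      rintro x ⟨i, rfl⟩
      exact Submodule.span_mono
        (Set.image_mono (by exact_mod_cast Finset.filter_subset _ G)) (hspan i)
  rw [← card_eq_finrank hli, hspaneq, hrank]


lemma weight_lemma {I J : Finset (Fin k)} (hI : I.card = r) (hJ : J.card = r)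
    (w : Fin k → ℤ) (hw : StrictAnti w)
    (h : ∀ t : Fin k, (J.filter (fun j => t ≤ j)).card ≤ (I.filter (fun j => t ≤ j)).card) :
    (∑ i ∈ I, w i) ≤ (∑ i ∈ J, w i) ∧ ((∑ i ∈ I, w i) = (∑ i ∈ J, w i) ↔ I = J) := by
  set eI := I.orderIsoOfFin hI with heI
  set eJ := J.orderIsoOfFin hJ with heJ
  have key : ∀ m : Fin r, (eJ m : Fin k) ≤ (eI m : Fin k) := by
    intro m
    by_contra hcon
    push_neg at hcon
    set t : Fin k := (eJ m : Fin k) with ht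
    have hJc : r - (m : ℕ) ≤ (J.filter (fun j => t ≤ j)).card := by
      have hsub : (Finset.Ici m).image (fun s => ((eJ s : Fin k))) ⊆
          J.filter (fun j => t ≤ j) := by
        intro j hj
        simp only [Finset.mem_image, Finset.mem_Ici] at hj
        obtain ⟨s, hms, rfl⟩ := hj
        exact Finset.mem_filter.mpr ⟨(eJ s).2, Subtype.coe_le_coe.mpr (eJ.monotone hms)⟩
      calc r - (m : ℕ) = (Finset.Ici m).card := (Fin.card_Ici m).symm
        _ = ((Finset.Ici m).image (fun s => ((eJ s : Fin k)))).card :=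
            (Finset.card_image_of_injective _
              (Subtype.val_injective.comp eJ.injective)).symm
        _ ≤ _ := Finset.card_le_card hsub
    have hIc : (I.filter (fun j => t ≤ j)).card ≤ r - 1 - (m : ℕ) := by
      have hsub : I.filter (fun j => t ≤ j) ⊆
          (Finset.Ioi m).image (fun s => ((eI s : Fin k))) := by
        intro j hj
        obtain ⟨hjI, htj⟩ := Finset.mem_filter.mp hj
        set s := eI.symm ⟨j, hjI⟩ with hs
        have hjs : (eI s : Fin k) = j := by rw [hs, OrderIso.apply_symm_apply]
        refine Finset.mem_image.mpr ⟨s, Finset.mem_Ioi.mpr ?_, hjs⟩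
        by_contra hsm
        push_neg at hsm
        have : (eI s : Fin k) ≤ (eI m : Fin k) := Subtype.coe_le_coe.mpr (eI.monotone hsm)
        rw [hjs] at this
        exact absurd (lt_of_le_of_lt this hcon) (not_lt.mpr htj)
      calc (I.filter (fun j => t ≤ j)).card
          ≤ ((Finset.Ioi m).image (fun s => ((eI s : Fin k)))).card := Finset.card_le_card hsub
        _ = (Finset.Ioi m).card := Finset.card_image_of_injective _
              (Subtype.val_injective.comp eI.injective)
        _ = r - 1 - (m : ℕ) := Fin.card_Ioi m
    have hm : (m : ℕ) < r := m.isLt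
    have := le_trans hJc (le_trans (h t) hIc)
    omega
  have hsum : ∀ (K : Finset (Fin k)) (hK : K.card = r),
      ∑ i ∈ K, w i = ∑ m : Fin r, w ((K.orderIsoOfFin hK m : Fin k)) := by
    intro K hK
    rw [← Finset.sum_coe_sort K w]
    exact (Fintype.sum_equiv (K.orderIsoOfFin hK).toEquiv _ _ (fun m => rfl)).symm
  have hptwise : ∀ m : Fin r, w ((eI m : Fin k)) ≤ w ((eJ m : Fin k)) :=
    fun m => hw.antitone (key m)
  rw [hsum I hI, hsum J hJ, ← heI, ← heJ]
  constructor
  · exact Finset.sum_le_sum (fun m _ => hptwise m)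
  constructor
  · intro heq
    have hall := (Finset.sum_eq_sum_iff_of_le (fun m _ => hptwise m)).mp heq
    have hmeq : ∀ m : Fin r, (eI m : Fin k) = (eJ m : Fin k) := by
      intro m
      exact hw.injective (hall m (Finset.mem_univ m))
    apply Finset.ext
    intro j
    constructor
    · intro hjI
      have : (eI (eI.symm ⟨j, hjI⟩) : Fin k) = j := by rw [OrderIso.apply_symm_apply]
      rw [← this, hmeq]
      exact (eJ _).2
    · intro hjJ
      have : (eJ (eJ.symm ⟨j, hjJ⟩) : Fin k) = j := by rw [OrderIso.apply_symm_apply]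
      rw [← this, ← hmeq]
      exact (eI _).2
  · intro hIJ
    subst hIJ
    have : eI = eJ := by rw [heI, heJ]
    rw [this]

end GreedyAux

open Finset Submodule in
/-- Let `M ∈ F^{r×k}` be full-rank with `r ≤ k`, let `I` be the
greedy set, and let `w_1 > w_2 > ⋯ > w_k` be integers. Then for every `J ⊆ [k]`
of size `r` with `M_J` nonsingular, `∑_{i∈I} w_i ≤ ∑_{i∈J} w_i`, with equality
iff `I = J`. -/
theorem greedySet_minimizes_weight {F : Type*} [Field F] {r k : ℕ}
    (hrk : r ≤ k) (M : Matrix (Fin r) (Fin k) F) (hM : M.rank = r)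
    (w : Fin k → ℤ) (hw : StrictAnti w)
    (J : Finset (Fin k)) (hJ : J.card = r)
    (hJns :
      (M.submatrix id (fun j : Fin r => ((J.orderIsoOfFin hJ j : J) : Fin k))).det ≠ 0) :
    (∑ i ∈ greedySet M, w i) ≤ (∑ i ∈ J, w i) ∧
      ((∑ i ∈ greedySet M, w i) = (∑ i ∈ J, w i) ↔ greedySet M = J) := by
  classical
  set v : Fin k → Fin r → F := fun j a => M a j with hv
  set f : Finset (Fin k) → Fin k → Finset (Fin k) := fun I i =>
    if (fun a => M a i) ∈
        Submodule.span F ((fun j (a : Fin r) => M a j) '' (I : Set (Fin k)))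
    then I else insert i I with hf
  have hgreedy : greedySet M = List.foldl f ∅ ((List.finRange k).reverse) := rfl
  have hfspec : ∀ (I : Finset (Fin k)) (i : Fin k),
      (v i ∈ Submodule.span F (v '' (I : Set (Fin k))) ∧ f I i = I) ∨
      (v i ∉ Submodule.span F (v '' (I : Set (Fin k))) ∧ f I i = insert i I) := by
    intro I i
    by_cases hc : (fun a => M a i) ∈
        Submodule.span F ((fun j (a : Fin r) => M a j) '' (I : Set (Fin k)))
    · exact Or.inl ⟨hc, if_pos hc⟩
    · exact Or.inr ⟨hc, if_neg hc⟩
  have hpair : ((List.finRange k).reverse).Pairwise (· > ·) :=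
    List.pairwise_reverse.mpr (List.pairwise_lt_finRange k)
  obtain ⟨-, hli, hspan'⟩ := GreedyAux.greedy_spec v f hfspec _ hpair
  rw [← hgreedy] at hli hspan'
  have hspan : ∀ i : Fin k, v i ∈ Submodule.span F
      (v '' (((greedySet M).filter (fun j => i ≤ j) : Finset (Fin k)) : Set (Fin k))) :=
    fun i => hspan' i (by simp [List.mem_reverse, List.mem_finRange])
  have hrank : Module.finrank F (Submodule.span F (Set.range v)) = r := by
    have : Set.range v = Set.range (Matrix.col M) := rfl
    rw [this, ← Matrix.rank_eq_finrank_span_cols, hM]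
  have hGcard : (greedySet M).card = r := GreedyAux.card_greedy hli hspan hrank
  have hu : IsUnit (M.submatrix id (fun j : Fin r => ((J.orderIsoOfFin hJ j : J) : Fin k))) :=
    (Matrix.isUnit_iff_isUnit_det _).mpr (isUnit_iff_ne_zero.mpr hJns)
  have hcols := Matrix.linearIndependent_cols_iff_isUnit.mpr hu
  have h1 : LinearIndependent F
      (fun j : Fin r => v ((J.orderIsoOfFin hJ j : J) : Fin k)) := hcols
  have hJli : LinearIndependent F fun x : (J : Set (Fin k)) => v x :=
    (linearIndependent_equiv (J.orderIsoOfFin hJ).toEquiv).mp h1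
  have hcounts : ∀ t : Fin k, (J.filter (fun j => t ≤ j)).card ≤
      ((greedySet M).filter (fun j => t ≤ j)).card :=
    GreedyAux.counts hli hspan hJli
  have hsum := GreedyAux.weight_lemma hGcard hJ w hw hcounts
  exact hsum
end

section
/- Let q ≥ 2 be a real number and r > 0 an integer. Then ∏_{i=1}^r (1 − q^{−i}) ≥ e^{−2/(q−1)}. -/
lemma key_exp {x : ℝ} (hx : 0 ≤ x) (hx2 : x ≤ 1/2) : Real.exp (-(2*x)) ≤ 1 - x := by
  have h1 : 2*x + 1 ≤ Real.exp (2*x) := Real.add_one_le_exp _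
  have hmul : Real.exp (-(2*x)) * Real.exp (2*x) = 1 := by
    rw [← Real.exp_add]; simp
  nlinarith [Real.exp_pos (-(2*x)), Real.exp_pos (2*x)]

/-- For a real number `q ≥ 2` and a positive integer `r`,
`∏_{i=1}^r (1 − q^{−i}) ≥ e^{−2/(q−1)}`. -/
theorem prod_one_sub_pow_ge {q : ℝ} (hq : 2 ≤ q) {r : ℕ} (hr : 0 < r) :
    Real.exp (-2 / (q - 1)) ≤ ∏ i ∈ Finset.Icc 1 r, (1 - q ^ (-(i : ℤ))) := by
  have hq1 : (1:ℝ) < q := by linarith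
  have hq0 : (0:ℝ) < q := by linarith
  have hterm : ∀ i : ℕ, q ^ (-(i:ℤ)) = (1/q)^i := by
    intro i
    rw [zpow_neg, zpow_natCast, one_div, inv_pow]
  have hx1 : (0:ℝ) ≤ 1/q := by positivity
  have hx2 : (1:ℝ)/q ≤ 1/2 := by
    apply one_div_le_one_div_of_le <;> linarith
  have hxlt : (1:ℝ)/q < 1 := by
    rw [div_lt_one hq0]; linarith
  have hsum : ∑ i ∈ Finset.Icc 1 r, (1/q)^i ≤ 1/(q-1) := by
    have h0 : Finset.Icc 1 r = Finset.Ico 1 (r+1) := by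
      rw [Finset.Ico_add_one_right_eq_Icc]
    rw [h0, Finset.sum_Ico_eq_sum_range]
    simp only [Nat.add_sub_cancel]
    have : ∀ i : ℕ, (1/q)^(1+i) = (1/q) * (1/q)^i := fun i => by rw [pow_add, pow_one]
    simp_rw [this, ← Finset.mul_sum]
    have hgeom : ∑ i ∈ Finset.range r, (1/q)^i ≤ (1 - 1/q)⁻¹ := by
      have hne : (1:ℝ)/q ≠ 1 := ne_of_lt hxlt
      rw [geom_sum_eq hne]
      have hd : (0:ℝ) < 1 - 1/q := by linarith
      have hp : (0:ℝ) ≤ (1/q)^r := pow_nonneg hx1 r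
      calc ((1/q)^r - 1)/(1/q - 1) = (1 - (1/q)^r)/(1 - 1/q) := by
            rw [← neg_div_neg_eq]; ring_nf
        _ ≤ 1/(1 - 1/q) := by gcongr; linarith
        _ = (1 - 1/q)⁻¹ := one_div _
    calc (1/q) * ∑ i ∈ Finset.range r, (1/q)^i ≤ (1/q) * (1 - 1/q)⁻¹ := by
          apply mul_le_mul_of_nonneg_left hgeom hx1
      _ = 1/(q-1) := by field_simp
  calc Real.exp (-2/(q-1)) ≤ Real.exp (-(2 * ∑ i ∈ Finset.Icc 1 r, (1/q)^i)) := by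
        apply Real.exp_le_exp.2
        have : (0:ℝ) < q - 1 := by linarith
        rw [neg_div]
        have := mul_le_mul_of_nonneg_left hsum (by norm_num : (0:ℝ) ≤ 2)
        rw [mul_one_div] at this
        linarith
    _ = ∏ i ∈ Finset.Icc 1 r, Real.exp (-(2 * (1/q)^i)) := by
        rw [← Real.exp_sum]
        congr 1
        rw [Finset.sum_neg_distrib, ← Finset.mul_sum]
    _ ≤ ∏ i ∈ Finset.Icc 1 r, (1 - q ^ (-(i:ℤ))) := by
        apply Finset.prod_le_prod
        · intro i _; positivity
        · intro i hi
          rw [hterm]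
          apply key_exp (by positivity)
          calc (1/q)^i ≤ (1/q)^1 := by
                apply pow_le_pow_of_le_one hx1 (le_of_lt hxlt) (Finset.mem_Icc.1 hi).1
            _ = 1/q := pow_one _
            _ ≤ 1/2 := hx2
end

section
/- Let r ≤ k be positive integers and F a field. Let E be a collection of r×k matrices over F, each of rank r. Then E is a (k,r,L) lossless rank extractor if and only if the collection {rowspan(E) : E ∈ E} of r-dimensional subspaces of F^k is a (k−r, L) weak subspace design, i.e., for every subspace W ⊆ F^k of dimension k−r, at most L of the row spaces intersect W nontrivially. -/
open Matrix Submodule Module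

private lemma vecMulLinear_eq_mulVecLin_transpose {F : Type*} [Field F] {m k : ℕ}
    (M : Matrix (Fin m) (Fin k) F) : M.vecMulLinear = Mᵀ.mulVecLin := by
  ext x j
  simp [Matrix.mulVec_transpose]

private lemma rank_eq_finrank_range_vecMulLinear {F : Type*} [Field F] {m k : ℕ}
    (M : Matrix (Fin m) (Fin k) F) :
    M.rank = finrank F (LinearMap.range M.vecMulLinear) := by
  rw [← Matrix.rank_transpose, Matrix.rank, vecMulLinear_eq_mulVecLin_transpose]

private lemma rank_lt_iff_ker_ne_bot {F : Type*} [Field F] {m k : ℕ}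
    (M : Matrix (Fin m) (Fin k) F) :
    M.rank < m ↔ LinearMap.ker M.vecMulLinear ≠ ⊥ := by
  have hrn := LinearMap.finrank_range_add_finrank_ker M.vecMulLinear
  rw [finrank_pi, Fintype.card_fin] at hrn
  rw [rank_eq_finrank_range_vecMulLinear]
  constructor
  · intro hlt hbot
    rw [hbot, finrank_bot] at hrn
    omega
  · intro hne
    have h0 : finrank F (LinearMap.ker M.vecMulLinear) ≠ 0 := by
      intro h0
      exact hne (Submodule.finrank_eq_zero.mp h0)
    omega

private lemma vecMulLinear_injective_of_rank {F : Type*} [Field F] {m k : ℕ}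
    (M : Matrix (Fin m) (Fin k) F) (h : M.rank = m) :
    Function.Injective M.vecMulLinear := by
  rw [← LinearMap.ker_eq_bot]
  by_contra hne
  exact absurd h (by simpa using ((rank_lt_iff_ker_ne_bot M).2 hne).ne)

private lemma key_iff {F : Type*} [Field F] {r k : ℕ}
    (A : Matrix (Fin r) (Fin k) F) (hA : A.rank = r)
    (M : Matrix (Fin k) (Fin r) F) :
    (A * M).rank < r ↔ span F (Set.range A) ⊓ LinearMap.ker M.vecMulLinear ≠ ⊥ := by
  have hinj := vecMulLinear_injective_of_rank A hA
  rw [rank_lt_iff_ker_ne_bot, Submodule.ne_bot_iff, Submodule.ne_bot_iff]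
  constructor
  · rintro ⟨x, hx, hx0⟩
    refine ⟨x ᵥ* A, ⟨?_, ?_⟩, ?_⟩
    · rw [show Set.range A = Set.range A.row from rfl, ← range_vecMulLinear]
      exact ⟨x, rfl⟩
    · simp only [SetLike.mem_coe, LinearMap.mem_ker, vecMulLinear_apply,
        Matrix.vecMul_vecMul] at hx ⊢
      exact hx
    · intro h0
      apply hx0
      apply hinj
      simpa using h0
  · rintro ⟨v, ⟨hv1, hv2⟩, hv0⟩
    rw [show Set.range A = Set.range A.row from rfl, ← range_vecMulLinear] at hv1
    obtain ⟨x, rfl⟩ := hv1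
    refine ⟨x, ?_, ?_⟩
    · simp only [SetLike.mem_coe, LinearMap.mem_ker, vecMulLinear_apply] at hv2 ⊢
      rw [← Matrix.vecMul_vecMul]
      exact hv2
    · rintro rfl
      simp at hv0

open Classical in
/-- Let `r ≤ k` and let `E : Fin n → F^{r×k}` be a collection of
matrices, each of rank `r`. Then `E` is a `(k,r,L)` lossless rank extractor
(for every rank-`r` matrix `M ∈ F^{k×r}`, at most `L` indices `i` have
`rank (E i * M) < r`) iff the collection of row spaces is a `(k−r, L)` weak
subspace design (for every subspace `W` of dimension `k−r`, at most `L` indices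
`i` have `rowspan (E i) ∩ W ≠ {0}`). -/
theorem losslessRankExtractor_iff_weakSubspaceDesign
    {F : Type*} [Field F] {r k n L : ℕ} (hr : 0 < r) (hrk : r ≤ k)
    (E : Fin n → Matrix (Fin r) (Fin k) F)
    (hE : ∀ i, (E i).rank = r) :
    (∀ M : Matrix (Fin k) (Fin r) F, M.rank = r →
        (Finset.univ.filter fun i => ((E i) * M).rank < r).card ≤ L) ↔
      (∀ W : Submodule F (Fin k → F), Module.finrank F W = k - r →
        (Finset.univ.filter fun i =>
            Submodule.span F (Set.range (E i)) ⊓ W ≠ ⊥).card ≤ L) := by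
  constructor
  · -- extractor → design
    intro h W hW
    have hq : finrank F ((Fin k → F) ⧸ W) = r := by
      have := W.finrank_quotient_add_finrank
      rw [finrank_pi, Fintype.card_fin] at this
      omega
    have hq' : finrank F ((Fin k → F) ⧸ W) = finrank F (Fin r → F) := by
      rw [hq, finrank_pi, Fintype.card_fin]
    let e : ((Fin k → F) ⧸ W) ≃ₗ[F] (Fin r → F) := LinearEquiv.ofFinrankEq _ _ hq'
    let f : (Fin k → F) →ₗ[F] (Fin r → F) := e.toLinearMap ∘ₗ W.mkQ
    let M : Matrix (Fin k) (Fin r) F := (LinearMap.toMatrix' f)ᵀ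
    have hMf : M.vecMulLinear = f := by
      rw [vecMulLinear_eq_mulVecLin_transpose, Matrix.transpose_transpose]
      refine LinearMap.ext fun x => ?_
      rw [Matrix.mulVecLin_apply, ← Matrix.toLin'_apply, Matrix.toLin'_toMatrix']
    have hker : LinearMap.ker M.vecMulLinear = W := by
      rw [hMf, LinearMap.ker_comp]
      simp [f]
    have hMrank : M.rank = r := by
      rw [rank_eq_finrank_range_vecMulLinear, hMf]
      have hsurj : Function.Surjective f := by
        simp only [f, LinearMap.coe_comp, LinearEquiv.coe_coe]
        exact e.surjective.comp W.mkQ_surjective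
      rw [LinearMap.range_eq_top.2 hsurj, finrank_top, finrank_pi, Fintype.card_fin]
    refine le_trans (le_of_eq ?_) (h M hMrank)
    congr 1
    apply Finset.filter_congr
    intro i _
    rw [← hker]
    exact (key_iff (E i) (hE i) M).symm
  · -- design → extractor
    intro h M hM
    set W := LinearMap.ker M.vecMulLinear with hWdef
    have hW : finrank F W = k - r := by
      have hrn := LinearMap.finrank_range_add_finrank_ker M.vecMulLinear
      rw [finrank_pi, Fintype.card_fin, ← rank_eq_finrank_range_vecMulLinear, hM,
        ← hWdef] at hrn
      omega
    refine le_trans (le_of_eq ?_) (h W hW)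
    congr 1
    apply Finset.filter_congr
    intro i _
    exact key_iff (E i) (hE i) M
end

section
/- Let F be a field with a nondegenerate standard bilinear form on F^k, let U ⊆ F^k have dimension r, and let V ⊆ F^k have dimension r. Then V^⊥ ∩ U ≠ {0} if and only if V ∩ U^⊥ ≠ {0}. -/
/-- The orthogonal complement of a subspace of `F^k` with respect to the
standard bilinear form (dot product). -/
def stdPerp {F : Type*} [Field F] {k : ℕ} (W : Submodule F (Fin k → F)) :
    Submodule F (Fin k → F) where
  carrier := {x | ∀ w ∈ W, dotProduct x w = 0}
  add_mem' := by
    intro a b ha hb w hw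
    simp [add_dotProduct, ha w hw, hb w hw]
  zero_mem' := by
    intro w hw
    simp [zero_dotProduct]
  smul_mem' := by
    intro c a ha w hw
    simp [smul_dotProduct, ha w hw]

/-- The dot-product bilinear form on `F^k`. -/
noncomputable def dotB (F : Type*) [Field F] (k : ℕ) :
    LinearMap.BilinForm F (Fin k → F) :=
  LinearMap.mk₂ F dotProduct
    (fun _ _ _ => add_dotProduct _ _ _)
    (fun _ _ _ => smul_dotProduct _ _ _)
    (fun _ _ _ => dotProduct_add _ _ _)
    (fun _ _ _ => dotProduct_smul _ _ _)

theorem dotB_refl (F : Type*) [Field F] (k : ℕ) : (dotB F k).IsRefl := by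
  intro x y h
  simp only [dotB, LinearMap.mk₂_apply] at h ⊢
  rwa [dotProduct_comm]

theorem dotB_nondeg (F : Type*) [Field F] (k : ℕ) : (dotB F k).Nondegenerate := by
  refine (LinearMap.IsRefl.nondegenerate_iff_separatingLeft (dotB_refl F k)).mpr ?_
  intro x hx
  funext i
  have := hx (Pi.single i 1)
  simpa [dotB] using this

theorem stdPerp_eq {F : Type*} [Field F] {k : ℕ} (W : Submodule F (Fin k → F)) :
    stdPerp W = (dotB F k).orthogonal W := by
  ext x
  constructor
  · intro hx w hw
    have := hx w hw
    simpa [dotB, LinearMap.BilinForm.IsOrtho, dotProduct_comm] using this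
  · intro hx w hw
    have := hx w hw
    simpa [dotB, LinearMap.BilinForm.IsOrtho, dotProduct_comm] using this

theorem dotB_orth_sup {F : Type*} [Field F] {k : ℕ} (A C : Submodule F (Fin k → F)) :
    (dotB F k).orthogonal (A ⊔ C) = (dotB F k).orthogonal A ⊓ (dotB F k).orthogonal C := by
  apply le_antisymm
  · exact le_inf ((dotB F k).orthogonal_le le_sup_left)
      ((dotB F k).orthogonal_le le_sup_right)
  · rintro x ⟨hxA, hxC⟩ n hn
    obtain ⟨a, ha, c, hc, rfl⟩ := Submodule.mem_sup.mp hn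
    have h1 := hxA a ha
    have h2 := hxC c hc
    simpa [LinearMap.BilinForm.IsOrtho] using congrArg₂ (· + ·) h1 h2

/-- Let `U, V ⊆ F^k` both have dimension `r` (with respect to
the standard, nondegenerate, dot-product bilinear form). Then
`V^⊥ ∩ U ≠ {0}` iff `V ∩ U^⊥ ≠ {0}`. -/
theorem perp_inter_ne_bot_iff {F : Type*} [Field F] {r k : ℕ} (hrk : r ≤ k)
    (U V : Submodule F (Fin k → F))
    (hU : Module.finrank F U = r) (hV : Module.finrank F V = r) :
    stdPerp V ⊓ U ≠ ⊥ ↔ V ⊓ stdPerp U ≠ ⊥ := by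
  classical
  set B := dotB F k with hB
  have hrefl := dotB_refl F k
  have hnd := dotB_nondeg F k
  have hk : Module.finrank F (Fin k → F) = k := by simp
  rw [stdPerp_eq, stdPerp_eq]
  have horthV : Module.finrank F (B.orthogonal V) = k - r := by
    rw [LinearMap.BilinForm.finrank_orthogonal hnd, hV, hk]
  have horthU : Module.finrank F (B.orthogonal U) = k - r := by
    rw [LinearMap.BilinForm.finrank_orthogonal hnd, hU, hk]
  -- key: equal finranks of the two intersections
  have hsup : Module.finrank F ((B.orthogonal V ⊔ U : Submodule F (Fin k → F))) +
      Module.finrank F ((B.orthogonal V ⊓ U : Submodule F (Fin k → F))) =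
      Module.finrank F (B.orthogonal V) + Module.finrank F U :=
    Submodule.finrank_sup_add_finrank_inf_eq _ _
  have hVU : (V ⊓ B.orthogonal U : Submodule F (Fin k → F)) =
      B.orthogonal (B.orthogonal V ⊔ U) := by
    rw [dotB_orth_sup, LinearMap.BilinForm.orthogonal_orthogonal hnd hrefl]
  have h2 : Module.finrank F ((V ⊓ B.orthogonal U : Submodule F (Fin k → F))) =
      k - Module.finrank F ((B.orthogonal V ⊔ U : Submodule F (Fin k → F))) := by
    rw [hVU, LinearMap.BilinForm.finrank_orthogonal hnd, hk]
  have hle : Module.finrank F ((B.orthogonal V ⊔ U : Submodule F (Fin k → F))) ≤ k := by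
    calc Module.finrank F ((B.orthogonal V ⊔ U : Submodule F (Fin k → F)))
        ≤ Module.finrank F (Fin k → F) := Submodule.finrank_le _
      _ = k := hk
  have key : Module.finrank F ((B.orthogonal V ⊓ U : Submodule F (Fin k → F))) =
      Module.finrank F ((V ⊓ B.orthogonal U : Submodule F (Fin k → F))) := by
    rw [h2]; rw [horthV, hU] at hsup; omega
  rw [Ne, Ne, ← Submodule.finrank_eq_zero (R := F), ← Submodule.finrank_eq_zero (R := F), key]
end

section
/- Let F_Q/F_q be a finite extension of finite fields of degree d with basis e_1,...,e_d of F_Q over F_q. Let E ∈ F_Q^{r×k} and M ∈ F_Q^{k×r} with det(EM) ≠ 0. For each row i of E, write E_i = Σ_{t=1}^d e_t E_i^{(t)} with E_i^{(t)} ∈ F_q^k. For σ ∈ [d]^r, let E^{(σ)} ∈ F_q^{r×k} be the matrix whose i-th row is E_i^{(σ_i)}. Then there exists σ ∈ [d]^r such that det(E^{(σ)} M) ≠ 0. -/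
/-- Let `F_Q / F_q` be a degree-`d` extension of finite fields
with basis `e_1, …, e_d` (encoded by a basis `b : Basis (Fin d) Fq FQ`). Let
`E ∈ F_Q^{r×k}` and `M ∈ F_Q^{k×r}` with `det (E * M) ≠ 0`. Writing each row of
`E` as `Σ_t e_t E_i^{(t)}` with `E_i^{(t)} ∈ F_q^k`, and for `σ ∈ [d]^r` letting
`E^{(σ)}` be the matrix over `F_q` whose `i`-th row is `E_i^{(σ_i)}`, there
exists `σ` with `det (E^{(σ)} M) ≠ 0`. -/
theorem exists_coordinate_selection_det_ne_zero
    {Fq FQ : Type*} [Field Fq] [Field FQ] [Fintype Fq] [Fintype FQ]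
    [Algebra Fq FQ] {d r k : ℕ} (b : Module.Basis (Fin d) Fq FQ)
    (E : Matrix (Fin r) (Fin k) FQ) (M : Matrix (Fin k) (Fin r) FQ)
    (hEM : (E * M).det ≠ 0) :
    ∃ σ : Fin r → Fin d,
      ((Matrix.of fun i j => algebraMap Fq FQ (b.repr (E i j) (σ i))) * M).det ≠ 0 := by
  by_contra h
  push_neg at h
  apply hEM
  set A : Fin d → Matrix (Fin r) (Fin k) FQ :=
    fun t => Matrix.of fun i j => algebraMap Fq FQ (b.repr (E i j) t) with hA
  have hrow : (fun i => (E * M) i) = fun i => ∑ t : Fin d, b t • ((A t * M) i) := by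
    funext i
    funext j'
    simp only [Matrix.mul_apply, Finset.sum_apply, Pi.smul_apply, Finset.smul_sum, hA,
      Matrix.of_apply, smul_eq_mul]
    simp_rw [Finset.mul_sum]
    rw [Finset.sum_comm]
    refine Finset.sum_congr rfl fun j _ => ?_
    simp_rw [← mul_assoc]
    rw [← Finset.sum_mul]
    congr 1
    have := b.sum_repr (E i j)
    calc E i j = ∑ t : Fin d, b.repr (E i j) t • b t := (b.sum_repr (E i j)).symm
      _ = ∑ t : Fin d, b t * algebraMap Fq FQ (b.repr (E i j) t) := by
          refine Finset.sum_congr rfl fun t _ => ?_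
          rw [Algebra.smul_def, mul_comm]
  have hdet : (E * M).det = Matrix.detRowAlternating (fun i => (E * M) i) := rfl
  rw [hdet, hrow]
  erw [(Matrix.detRowAlternating :
      AlternatingMap FQ (Fin r → FQ) FQ (Fin r)).toMultilinearMap.map_sum
    (g := fun i t => b t • ((A t * M) i))]
  refine Finset.sum_eq_zero fun σ _ => ?_
  have h0 : (fun i => (A (σ i) * M) i)
      = ((Matrix.of fun i j => algebraMap Fq FQ (b.repr (E i j) (σ i))) * M) := by
    funext i j'
    simp [hA, Matrix.mul_apply]
  erw [(Matrix.detRowAlternating :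
      AlternatingMap FQ (Fin r → FQ) FQ (Fin r)).map_smul_univ
    (fun i => b (σ i)) (fun i => (A (σ i) * M) i), h0]
  have : Matrix.detRowAlternating
      ((Matrix.of fun i j => algebraMap Fq FQ (b.repr (E i j) (σ i))) * M) = 0 := h σ
  exact smul_eq_zero_of_right _ this
end

section
/- Let G = F_q^k and let B ⊆ G be a nonempty ε-biased set with ε < q^{−s}, where 1 ≤ s ≤ k. Then B intersects every affine subspace of F_q^k of codimension s; i.e., B is an affine s-blocking set. -/
/-- Let `G = F_q^k` and let `B ⊆ G` be a nonempty `ε`-biased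
set with `ε < q^{−s}`, where `1 ≤ s ≤ k`. Then `B` meets every affine subspace
of codimension `s`; i.e., `B` is an affine `s`-blocking set. -/
theorem epsBiased_is_affine_blocking
    {Fq : Type*} [Field Fq] [Fintype Fq] {k s : ℕ} (hs : 1 ≤ s) (hsk : s ≤ k)
    (B : Finset (Fin k → Fq)) (hB : B.Nonempty) {ε : ℝ}
    (hbias : ∀ χ : AddChar (Fin k → Fq) ℂ, χ ≠ 1 →
      ‖(∑ x ∈ B, χ x) / (B.card : ℂ)‖ ≤ ε)
    (hε : ε < ((Fintype.card Fq : ℝ)) ^ (-(s : ℤ))) :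
    ∀ (u : Fin k → Fq) (L : Submodule Fq (Fin k → Fq)),
      Module.finrank Fq L = k - s → ∃ x ∈ B, ∃ y ∈ L, x = u + y := by
  classical
  intro u L hL
  by_contra hcon
  push_neg at hcon
  haveI : Fintype ((Fin k → Fq) ⧸ L) := Fintype.ofFinite _
  have hG : Module.finrank Fq (Fin k → Fq) = k := by
    simpa using Module.finrank_fintype_fun_eq_card Fq (η := Fin k)
  have hQrank : Module.finrank Fq ((Fin k → Fq) ⧸ L) = s := by
    have := Submodule.finrank_quotient_add_finrank L
    omega
  have hQcard : Fintype.card ((Fin k → Fq) ⧸ L) = Fintype.card Fq ^ s := by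
    rw [Module.card_eq_pow_finrank (K := Fq) (V := (Fin k → Fq) ⧸ L), hQrank]
  -- each element of B avoids the affine subspace
  have hne : ∀ x ∈ B, L.mkQ (x - u) ≠ 0 := by
    intro x hx h0
    have hmem : x - u ∈ L := by simpa [Submodule.Quotient.mk_eq_zero] using
      (Submodule.Quotient.mk_eq_zero L).mp h0
    exact hcon x hx (x - u) hmem (by abel)
  -- the double sum vanishes
  have hsum0 : ∑ ψ : AddChar ((Fin k → Fq) ⧸ L) ℂ, ∑ x ∈ B, ψ (L.mkQ (x - u)) = 0 := by
    rw [Finset.sum_comm]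
    refine Finset.sum_eq_zero fun x hx => ?_
    exact AddChar.sum_apply_eq_zero_iff_ne_zero.2 (hne x hx)
  -- split off the trivial character
  have h1 : ∑ x ∈ B, (1 : AddChar ((Fin k → Fq) ⧸ L) ℂ) (L.mkQ (x - u)) = (B.card : ℂ) := by
    simp
  have hsplit : ∑ ψ ∈ (Finset.univ.erase (1 : AddChar ((Fin k → Fq) ⧸ L) ℂ)),
      ∑ x ∈ B, ψ (L.mkQ (x - u)) = -(B.card : ℂ) := by
    have h := Finset.add_sum_erase Finset.univ
      (fun ψ : AddChar ((Fin k → Fq) ⧸ L) ℂ => ∑ x ∈ B, ψ (L.mkQ (x - u)))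
      (Finset.mem_univ 1)
    rw [hsum0] at h
    have h' : (∑ x ∈ B, (1 : AddChar ((Fin k → Fq) ⧸ L) ℂ) (L.mkQ (x - u))) +
        ∑ ψ ∈ (Finset.univ.erase (1 : AddChar ((Fin k → Fq) ⧸ L) ℂ)),
          ∑ x ∈ B, ψ (L.mkQ (x - u)) = 0 := h
    rw [h1] at h'
    linear_combination h'
  -- bound each nontrivial term
  have hBpos : (0 : ℝ) < (B.card : ℝ) := by
    exact_mod_cast Finset.card_pos.2 hB
  have hterm : ∀ ψ ∈ (Finset.univ.erase (1 : AddChar ((Fin k → Fq) ⧸ L) ℂ)),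
      ‖∑ x ∈ B, ψ (L.mkQ (x - u))‖ ≤ ε * (B.card : ℝ) := by
    intro ψ hψ
    have hψ1 : ψ ≠ 1 := (Finset.mem_erase.mp hψ).1
    set χ : AddChar (Fin k → Fq) ℂ := ψ.compAddMonoidHom L.mkQ with hχdef
    have hχ1 : χ ≠ 1 := by
      intro heq
      apply hψ1
      ext a
      obtain ⟨x, rfl⟩ := L.mkQ_surjective a
      have := congrArg (fun c : AddChar (Fin k → Fq) ℂ => c x) heq
      simpa [hχdef] using this
    have hfac : ∑ x ∈ B, ψ (L.mkQ (x - u)) = ψ (L.mkQ (-u)) * ∑ x ∈ B, χ x := by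
      rw [Finset.mul_sum]
      refine Finset.sum_congr rfl fun x _ => ?_
      have harg : L.mkQ (x - u) = L.mkQ (-u) + L.mkQ x := by
        rw [← map_add]; congr 1; abel
      rw [harg, AddChar.map_add_eq_mul]
      rfl
    have hb := hbias χ hχ1
    rw [norm_div, Complex.norm_natCast] at hb
    have hb' : ‖∑ x ∈ B, χ x‖ ≤ ε * (B.card : ℝ) :=
      (div_le_iff₀ hBpos).mp hb
    calc ‖∑ x ∈ B, ψ (L.mkQ (x - u))‖
        = ‖ψ (L.mkQ (-u))‖ * ‖∑ x ∈ B, χ x‖ := by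
          rw [hfac, norm_mul]
      _ = ‖∑ x ∈ B, χ x‖ := by
          rw [show ‖ψ (L.mkQ (-u))‖ = ‖ψ (L.mkQ (-u))‖ from rfl,
            AddChar.norm_apply, one_mul]
      _ ≤ ε * (B.card : ℝ) := hb'
  -- put it together
  have hcardchar : Fintype.card (AddChar ((Fin k → Fq) ⧸ L) ℂ) = Fintype.card Fq ^ s := by
    rw [AddChar.card_eq, hQcard]
  have hmain : (B.card : ℝ) ≤ ((Fintype.card Fq ^ s - 1 : ℕ) : ℝ) * (ε * (B.card : ℝ)) := by
    calc (B.card : ℝ) = ‖-(B.card : ℂ)‖ := by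
          rw [norm_neg, Complex.norm_natCast]
      _ = ‖∑ ψ ∈ (Finset.univ.erase (1 : AddChar ((Fin k → Fq) ⧸ L) ℂ)),
            ∑ x ∈ B, ψ (L.mkQ (x - u))‖ := by rw [hsplit]
      _ ≤ ∑ ψ ∈ (Finset.univ.erase (1 : AddChar ((Fin k → Fq) ⧸ L) ℂ)),
            ‖∑ x ∈ B, ψ (L.mkQ (x - u))‖ := by
          exact
            norm_sum_le (Finset.univ.erase (1 : AddChar ((Fin k → Fq) ⧸ L) ℂ))
              (fun ψ => ∑ x ∈ B, ψ (L.mkQ (x - u)))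
      _ ≤ ∑ _ψ ∈ (Finset.univ.erase (1 : AddChar ((Fin k → Fq) ⧸ L) ℂ)),
            ε * (B.card : ℝ) := Finset.sum_le_sum hterm
      _ = ((Fintype.card Fq ^ s - 1 : ℕ) : ℝ) * (ε * (B.card : ℝ)) := by
          rw [Finset.sum_const, Finset.card_erase_of_mem (Finset.mem_univ _),
            Finset.card_univ, hcardchar, nsmul_eq_mul]
  -- derive the contradiction
  have hq1 : (1 : ℕ) ≤ Fintype.card Fq := Fintype.card_pos
  have hqs1 : (1 : ℕ) ≤ Fintype.card Fq ^ s := Nat.one_le_pow _ _ Fintype.card_pos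
  have hqsR : (1 : ℝ) ≤ ((Fintype.card Fq : ℝ)) ^ s := by
    exact_mod_cast hqs1
  have hcast : ((Fintype.card Fq ^ s - 1 : ℕ) : ℝ) = ((Fintype.card Fq : ℝ)) ^ s - 1 := by
    push_cast [Nat.cast_sub hqs1]
    ring
  rw [hcast] at hmain
  have hεqs : ε * ((Fintype.card Fq : ℝ)) ^ s < 1 := by
    have hpos : (0 : ℝ) < ((Fintype.card Fq : ℝ)) ^ s := by linarith
    have : ((Fintype.card Fq : ℝ)) ^ (-(s : ℤ)) = (((Fintype.card Fq : ℝ)) ^ s)⁻¹ := by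
      rw [zpow_neg, zpow_natCast]
    rw [this] at hε
    calc ε * ((Fintype.card Fq : ℝ)) ^ s
        < (((Fintype.card Fq : ℝ)) ^ s)⁻¹ * ((Fintype.card Fq : ℝ)) ^ s :=
          mul_lt_mul_of_pos_right hε hpos
      _ = 1 := inv_mul_cancel₀ (ne_of_gt hpos)
  rw [← mul_assoc] at hmain
  have h2 : (1 : ℝ) ≤ (((Fintype.card Fq : ℝ)) ^ s - 1) * ε :=
    le_of_mul_le_mul_right (by linarith [hmain]) hBpos
  have hεneg : ε < 0 := by nlinarith [h2, hεqs, hqsR]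
  nlinarith [h2, hqsR, hεneg]
end

section
/- Let G = F_q^k and let B ⊆ G be a nonempty ε-biased set with ε < (q−1)/(2q^{s+1}), where 1 ≤ s < k. Then for every linear subspace L ⊆ F_q^k of codimension s and every hyperplane H of L (i.e., a subspace of L of codimension 1 in L), B ∩ (L \ H) is nonempty. -/
open Finset

private lemma annFinrank {Fq V : Type*} [Field Fq] [AddCommGroup V] [Module Fq V]
    [FiniteDimensional Fq V] (M : Submodule Fq V) :
    Module.finrank Fq M.dualAnnihilator = Module.finrank Fq V - Module.finrank Fq M := by
  have h : Module.finrank Fq (V ⧸ M) = Module.finrank Fq M.dualAnnihilator :=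
    (Subspace.quotEquivAnnihilator M).finrank_eq
  have h2 := Submodule.finrank_quotient_add_finrank M
  omega

private lemma annSum {Fq V : Type*} [Field Fq] [Fintype Fq] [AddCommGroup V] [Module Fq V]
    [FiniteDimensional Fq V] (ψ : AddChar Fq ℂ) (hψ : ψ ≠ 1)
    (M : Submodule Fq V) [Fintype M.dualAnnihilator] (x : V) [Decidable (x ∈ M)] :
    ∑ φ : M.dualAnnihilator, ψ ((φ : Module.Dual Fq V) x)
      = if x ∈ M then (Fintype.card M.dualAnnihilator : ℂ) else 0 := by
  split_ifs with hx
  · have h1 : ∀ φ : M.dualAnnihilator, ψ ((φ : Module.Dual Fq V) x) = 1 := fun φ => by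
      rw [(Submodule.mem_dualAnnihilator _).mp φ.2 x hx, AddChar.map_zero_eq_one]
    simp [h1, Finset.card_univ]
  · set e : AddChar M.dualAnnihilator ℂ :=
      { toFun := fun φ => ψ ((φ : Module.Dual Fq V) x),
        map_zero_eq_one' := by simp
        map_add_eq_mul' := fun a b => by
          simp [AddChar.map_add_eq_mul] } with he_def
    have he : e ≠ 1 := by
      obtain ⟨φ₀, hφ₀mem, hφ₀⟩ : ∃ φ₀ ∈ M.dualAnnihilator, φ₀ x ≠ 0 := by
        by_contra h; push_neg at h
        exact hx ((Subspace.forall_mem_dualAnnihilator_apply_eq_zero_iff M x).mp h)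
      obtain ⟨b, hb⟩ := AddChar.ne_one_iff.mp hψ
      refine AddChar.ne_one_iff.mpr
        ⟨⟨(b * (φ₀ x)⁻¹) • φ₀, M.dualAnnihilator.smul_mem _ hφ₀mem⟩, ?_⟩
      show ψ (((b * (φ₀ x)⁻¹) • φ₀) x) ≠ 1
      rwa [LinearMap.smul_apply, smul_eq_mul, mul_assoc, inv_mul_cancel₀ hφ₀, mul_one]
    exact AddChar.sum_eq_zero_of_ne_one he

private lemma countLemma {Fq V : Type*} [Field Fq] [Fintype Fq] [AddCommGroup V] [Module Fq V]
    [FiniteDimensional Fq V] (ψ : AddChar Fq ℂ) (hψ : ψ ≠ 1)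
    (M : Submodule Fq V) [Fintype M.dualAnnihilator] (B : Finset V)
    [DecidablePred (· ∈ M)] :
    (Fintype.card M.dualAnnihilator : ℂ) * ((B.filter (· ∈ M)).card : ℂ)
      = ∑ φ : M.dualAnnihilator, ∑ x ∈ B, ψ ((φ : Module.Dual Fq V) x) := by
  rw [Finset.sum_comm]
  have h1 : ∀ x ∈ B, ∑ φ : M.dualAnnihilator, ψ ((φ : Module.Dual Fq V) x)
      = if x ∈ M then (Fintype.card M.dualAnnihilator : ℂ) else 0 :=
    fun x _ => annSum ψ hψ M x
  rw [Finset.sum_congr rfl h1, Finset.sum_ite, Finset.sum_const, Finset.sum_const_zero,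
    add_zero, nsmul_eq_mul, mul_comm]

set_option maxHeartbeats 1600000 in
/-- Let `G = F_q^k` and let `B ⊆ G` be a nonempty `ε`-biased
set with `ε < (q−1)/(2q^{s+1})`, where `1 ≤ s < k`. Then for every linear
subspace `L ⊆ F_q^k` of codimension `s` and every hyperplane `H` of `L`
(a subspace of `L` of dimension `k − s − 1`), `B ∩ (L \ H)` is nonempty. -/
theorem epsBiased_meets_subspace_off_hyperplane
    {Fq : Type*} [Field Fq] [Fintype Fq] {k s : ℕ} (hs : 1 ≤ s) (hsk : s < k)
    (B : Finset (Fin k → Fq)) (hB : B.Nonempty) {ε : ℝ}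
    (hbias : ∀ χ : AddChar (Fin k → Fq) ℂ, χ ≠ 1 →
      ‖(∑ x ∈ B, χ x) / (B.card : ℂ)‖ ≤ ε)
    (hε : ε < ((Fintype.card Fq : ℝ) - 1) / (2 * (Fintype.card Fq : ℝ) ^ (s + 1))) :
    ∀ (L H : Submodule Fq (Fin k → Fq)), H ≤ L →
      Module.finrank Fq L = k - s → Module.finrank Fq H = k - s - 1 →
      ∃ x ∈ B, x ∈ L ∧ x ∉ H := by
  classical
  intro L H hHL hL hH
  by_contra hcon
  push_neg at hcon
  -- a nontrivial character of Fq
  obtain ⟨ψ, hψ1⟩ := (AddChar.exists_apply_ne_zero (a := (1 : Fq))).2 one_ne_zero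
  have hψ : ψ ≠ 1 := fun h => hψ1 (by simp [h])
  haveI : Finite (Module.Dual Fq (Fin k → Fq)) :=
    Finite.of_injective _ DFunLike.coe_injective
  haveI fL : Fintype L.dualAnnihilator := Fintype.ofFinite _
  haveI fH : Fintype H.dualAnnihilator := Fintype.ofFinite _
  have hkV : Module.finrank Fq (Fin k → Fq) = k := Module.finrank_fin_fun Fq
  -- dimensions / cardinalities of annihilators
  have frL : Module.finrank Fq L.dualAnnihilator = s := by
    rw [annFinrank, hkV, hL]; omega
  have frH : Module.finrank Fq H.dualAnnihilator = s + 1 := by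
    rw [annFinrank, hkV, hH]; omega
  have cardL : Fintype.card L.dualAnnihilator = Fintype.card Fq ^ s := by
    rw [Module.card_eq_pow_finrank (K := Fq), frL]
  have cardH : Fintype.card H.dualAnnihilator = Fintype.card Fq ^ (s + 1) := by
    rw [Module.card_eq_pow_finrank (K := Fq), frH]
  -- characters attached to nonzero functionals are nontrivial
  have hchi : ∀ φ : Module.Dual Fq (Fin k → Fq), φ ≠ 0 →
      (ψ.compAddMonoidHom φ.toAddMonoidHom) ≠ 1 := by
    intro φ hφ
    obtain ⟨v, hv⟩ : ∃ v, φ v ≠ 0 := by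
      by_contra h; push_neg at h; exact hφ (LinearMap.ext fun v => h v)
    refine AddChar.ne_one_iff.mpr ⟨(φ v)⁻¹ • v, ?_⟩
    have : φ ((φ v)⁻¹ • v) = 1 := by
      rw [map_smul, smul_eq_mul, inv_mul_cancel₀ hv]
    simpa [this] using hψ1
  -- the bias bound for nonzero functionals
  have hBc0 : (0 : ℝ) < (B.card : ℝ) := by
    exact_mod_cast Finset.card_pos.mpr hB
  have hT : ∀ φ : Module.Dual Fq (Fin k → Fq), φ ≠ 0 →
      ‖∑ x ∈ B, ψ (φ x)‖ ≤ ε * (B.card : ℝ) := by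
    intro φ hφ
    have h1 := hbias _ (hchi φ hφ)
    have h2 : ‖(∑ x ∈ B, ψ (φ x)) / (B.card : ℂ)‖ ≤ ε := by
      simpa using h1
    rw [norm_div, Complex.norm_natCast] at h2
    calc ‖∑ x ∈ B, ψ (φ x)‖
        = ‖∑ x ∈ B, ψ (φ x)‖ / (B.card : ℝ) * (B.card : ℝ) := by
          field_simp
      _ ≤ ε * (B.card : ℝ) := by
          exact mul_le_mul_of_nonneg_right h2 (le_of_lt hBc0)
  have hε0 : 0 ≤ ε := by
    have hne : ∃ φ : H.dualAnnihilator, (φ : Module.Dual Fq (Fin k → Fq)) ≠ 0 := by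
      have : H.dualAnnihilator ≠ ⊥ := by
        intro hbot
        rw [hbot] at frH; simp at frH
      obtain ⟨x, hx, hx0⟩ := Submodule.exists_mem_ne_zero_of_ne_bot this
      exact ⟨⟨x, hx⟩, hx0⟩
    obtain ⟨φ, hφ⟩ := hne
    exact le_trans (norm_nonneg _) (hbias _ (hchi _ hφ))
  -- counts
  set cL : ℕ := (B.filter (· ∈ L)).card with hcL
  set cH : ℕ := (B.filter (· ∈ H)).card with hcH
  have hfilter : B.filter (· ∈ L) = B.filter (· ∈ H) := by
    apply Finset.filter_congr
    intro x hx
    exact ⟨fun h => hcon x hx h, fun h => hHL h⟩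
  -- the two Fourier identities
  set EL : ℂ := ∑ φ ∈ (Finset.univ.erase (0 : L.dualAnnihilator)),
      ∑ x ∈ B, ψ ((φ : Module.Dual Fq (Fin k → Fq)) x) with hEL
  set EH : ℂ := ∑ φ ∈ (Finset.univ.erase (0 : H.dualAnnihilator)),
      ∑ x ∈ B, ψ ((φ : Module.Dual Fq (Fin k → Fq)) x) with hEH
  have zeroTerm : ∀ (M : Submodule Fq (Fin k → Fq)),
      (∑ x ∈ B, ψ (((0 : M.dualAnnihilator) : Module.Dual Fq (Fin k → Fq)) x))
        = (B.card : ℂ) := by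
    intro M
    have h1 : ∀ x ∈ B,
        ψ (((0 : M.dualAnnihilator) : Module.Dual Fq (Fin k → Fq)) x) = (1 : ℂ) := by
      intro x _
      rw [ZeroMemClass.coe_zero, LinearMap.zero_apply, AddChar.map_zero_eq_one]
    rw [Finset.sum_congr rfl h1, Finset.sum_const, nsmul_eq_mul, mul_one]
  have e1 : ((Fintype.card Fq : ℂ)) ^ s * (cL : ℂ) = (B.card : ℂ) + EL := by
    have := countLemma ψ hψ L B
    rw [cardL] at this
    rw [hcL]
    push_cast at this ⊢
    rw [this, hEL, ← Finset.add_sum_erase _ _ (Finset.mem_univ (0 : L.dualAnnihilator)),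
      zeroTerm L]
  have e2 : ((Fintype.card Fq : ℂ)) ^ (s + 1) * (cH : ℂ) = (B.card : ℂ) + EH := by
    have := countLemma ψ hψ H B
    rw [cardH] at this
    rw [hcH]
    push_cast at this ⊢
    rw [this, hEH, ← Finset.add_sum_erase _ _ (Finset.mem_univ (0 : H.dualAnnihilator)),
      zeroTerm H]
  have hcc : (cL : ℂ) = (cH : ℂ) := by rw [hcL, hcH, hfilter]
  -- main identity
  have e3 : EH - (Fintype.card Fq : ℂ) * EL
      = ((Fintype.card Fq : ℂ) - 1) * (B.card : ℂ) := by
    linear_combination (Fintype.card Fq : ℂ) * e1 - e2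
      - ((Fintype.card Fq : ℂ)) ^ (s + 1) * hcc
  -- error bounds
  have boundE : ∀ (M : Submodule Fq (Fin k → Fq)) (inst : Fintype M.dualAnnihilator),
      ‖∑ φ ∈ (Finset.univ.erase (0 : M.dualAnnihilator)),
          ∑ x ∈ B, ψ ((φ : Module.Dual Fq (Fin k → Fq)) x)‖
        ≤ ((Fintype.card M.dualAnnihilator : ℝ) - 1) * (ε * (B.card : ℝ)) := by
    intro M inst
    calc ‖∑ φ ∈ (Finset.univ.erase (0 : M.dualAnnihilator)),
          ∑ x ∈ B, ψ ((φ : Module.Dual Fq (Fin k → Fq)) x)‖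
        ≤ ∑ φ ∈ (Finset.univ.erase (0 : M.dualAnnihilator)),
            ‖∑ x ∈ B, ψ ((φ : Module.Dual Fq (Fin k → Fq)) x)‖ :=
          norm_sum_le _ _
      _ ≤ (Finset.univ.erase (0 : M.dualAnnihilator)).card • (ε * (B.card : ℝ)) := by
          apply Finset.sum_le_card_nsmul
          intro φ hφ
          have hφ0 : (φ : Module.Dual Fq (Fin k → Fq)) ≠ 0 := by
            have := Finset.ne_of_mem_erase hφ
            simpa [Submodule.coe_eq_zero] using this
          exact hT _ hφ0
      _ = ((Fintype.card M.dualAnnihilator : ℝ) - 1) * (ε * (B.card : ℝ)) := by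
          rw [Finset.card_erase_of_mem (Finset.mem_univ _), Finset.card_univ,
            nsmul_eq_mul]
          have h1 : 1 ≤ Fintype.card M.dualAnnihilator := Fintype.card_pos
          push_cast [Nat.cast_sub h1]
          ring
  have bL := boundE L fL
  have bH := boundE H fH
  rw [cardL] at bL
  rw [cardH] at bH
  rw [← hEL] at bL
  rw [← hEH] at bH
  -- final contradiction
  set Q : ℝ := (Fintype.card Fq : ℝ) with hQ
  have hq2 : (2 : ℝ) ≤ Q := by
    have := Fintype.one_lt_card (α := Fq)
    rw [hQ]; exact_mod_cast this
  have habs : (Q - 1) * (B.card : ℝ)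
      ≤ (Q ^ (s + 1) - 1) * (ε * (B.card : ℝ)) + Q * ((Q ^ s - 1) * (ε * (B.card : ℝ))) := by
    have h1 : ‖EH - (Fintype.card Fq : ℂ) * EL‖ = (Q - 1) * (B.card : ℝ) := by
      rw [e3]
      have : ((Fintype.card Fq : ℂ) - 1) * (B.card : ℂ)
          = (((Q - 1) * (B.card : ℝ) : ℝ) : ℂ) := by
        push_cast [hQ]; ring
      rw [this, Complex.norm_real, Real.norm_eq_abs, abs_of_nonneg]
      have : (0 : ℝ) ≤ Q - 1 := by linarith
      positivity
    calc (Q - 1) * (B.card : ℝ)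
        = ‖EH - (Fintype.card Fq : ℂ) * EL‖ := h1.symm
      _ ≤ ‖EH‖ + ‖(Fintype.card Fq : ℂ) * EL‖ := by
          exact (norm_sub_le _ _)
      _ = ‖EH‖ + Q * ‖EL‖ := by
          rw [norm_mul, Complex.norm_natCast, hQ]
      _ ≤ (Q ^ (s + 1) - 1) * (ε * (B.card : ℝ)) + Q * ((Q ^ s - 1) * (ε * (B.card : ℝ))) := by
          have hQ0 : (0 : ℝ) ≤ Q := by linarith
          have h2 : ‖EH‖ ≤ (Q ^ (s + 1) - 1) * (ε * (B.card : ℝ)) := by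
            convert bH using 3 <;> push_cast [hQ] <;> ring
          have h3 : ‖EL‖ ≤ (Q ^ s - 1) * (ε * (B.card : ℝ)) := by
            convert bL using 3 <;> push_cast [hQ] <;> ring
          have := mul_le_mul_of_nonneg_left h3 hQ0
          linarith
  have hQpow : (0 : ℝ) < Q ^ (s + 1) := by positivity
  have h5 : ε * (2 * Q ^ (s + 1)) < Q - 1 := by
    rw [lt_div_iff₀ (by positivity)] at hε
    exact hε
  have hQs1 : Q ^ (s + 1) = Q ^ s * Q := pow_succ Q s
  have hQs : (1 : ℝ) ≤ Q ^ s := one_le_pow₀ (by linarith)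
  nlinarith [mul_lt_mul_of_pos_right h5 hBc0, mul_nonneg hε0 (le_of_lt hBc0),
    mul_nonneg (mul_nonneg hε0 (le_of_lt hBc0)) (by linarith : (0:ℝ) ≤ Q)]
end

section
/- Let s < k be positive integers and q a prime power. Suppose E = {E_1,...,E_n} ⊆ F_q^{(s+1)×k} is a (k, s+1) lossless rank disperser over F_q, i.e., for every M ∈ F_q^{k×(s+1)} of rank s+1 there is some i with rank(E_i M) = s+1. Let V_i = rowspan(E_i). Then for every subspace L ⊆ F_q^k of codimension s and every hyperplane H of L, there exists i ∈ [n] with V_i ∩ L ⊄ H (in particular V_i ∩ (L \ H) ≠ ∅). -/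
open Module Submodule Matrix

set_option maxHeartbeats 1000000 in
set_option synthInstance.maxHeartbeats 400000 in
/-- Let `s < k` be positive integers and `F_q` a finite field.
Suppose `E : Fin n → F_q^{(s+1)×k}` is a `(k, s+1)` lossless rank disperser:
for every `M ∈ F_q^{k×(s+1)}` of rank `s+1` there is `i` with
`rank (E i * M) = s+1`. Let `V_i = rowspan (E i)`. Then for every subspace
`L ⊆ F_q^k` of codimension `s` and every hyperplane `H` of `L`, there exists
`i` with `V_i ∩ L ⊄ H`. -/
theorem rankDisperser_rowspans_block
    {Fq : Type*} [Field Fq] [Fintype Fq] {s k n : ℕ} (hs : 0 < s) (hsk : s < k)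
    (E : Fin n → Matrix (Fin (s + 1)) (Fin k) Fq)
    (hdisp : ∀ M : Matrix (Fin k) (Fin (s + 1)) Fq, M.rank = s + 1 →
      ∃ i, ((E i) * M).rank = s + 1) :
    ∀ (L H : Submodule Fq (Fin k → Fq)), H ≤ L →
      Module.finrank Fq L = k - s → Module.finrank Fq H = k - s - 1 →
      ∃ i, ¬ (Submodule.span Fq (Set.range (E i)) ⊓ L ≤ H) := by
  classical
  intro L H hHL hL hH
  -- the quotient by H has dimension s+1
  have hQ : finrank Fq ((Fin k → Fq) ⧸ H) = s + 1 := by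
    have h2 : finrank Fq ((Fin k → Fq) ⧸ H) + finrank Fq H = finrank Fq (Fin k → Fq) :=
      Submodule.finrank_quotient_add_finrank H
    rw [finrank_pi] at h2
    simp only [Fintype.card_fin] at h2
    omega
  -- linear equivalence from the quotient to Fq^{s+1}
  have hQ' : finrank Fq ((Fin k → Fq) ⧸ H) = finrank Fq (Fin (s + 1) → Fq) := by
    rw [hQ, finrank_pi, Fintype.card_fin]
  let e : ((Fin k → Fq) ⧸ H) ≃ₗ[Fq] (Fin (s + 1) → Fq) := LinearEquiv.ofFinrankEq _ _ hQ'
  -- the surjection Ψ with kernel H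
  set Φ : (Fin k → Fq) →ₗ[Fq] (Fin (s + 1) → Fq) := e.toLinearMap ∘ₗ H.mkQ with hΦdef
  have hker : LinearMap.ker Φ = H := by
    rw [hΦdef, LinearMap.ker_comp, LinearEquiv.ker, Submodule.comap_bot, Submodule.ker_mkQ]
  have hsurj : Function.Surjective Φ := e.surjective.comp (Submodule.mkQ_surjective H)
  -- the matrix of Φ, transposed
  set M : Matrix (Fin k) (Fin (s + 1)) Fq := (LinearMap.toMatrix' Φ)ᵀ with hM
  have hmulVecLin : (LinearMap.toMatrix' Φ).mulVecLin = Φ := by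
    rw [← Matrix.toLin'_apply', Matrix.toLin'_toMatrix']
  -- M has rank s+1
  have hMrank : M.rank = s + 1 := by
    rw [hM, Matrix.rank_transpose, Matrix.rank, hmulVecLin,
      LinearMap.range_eq_top.mpr hsurj, finrank_top, finrank_pi, Fintype.card_fin]
  -- apply the disperser hypothesis
  obtain ⟨i, hi⟩ := hdisp M hMrank
  refine ⟨i, fun hle => ?_⟩
  set Vi : Submodule Fq (Fin k → Fq) := Submodule.span Fq (Set.range (E i)) with hVi
  -- rows of E i * M are Φ applied to rows of E i
  have hrowsEM : (E i * M) = fun r => Φ (E i r) := by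
    funext r j
    rw [Matrix.mul_apply]
    rw [LinearMap.pi_apply_eq_sum_univ Φ (E i r), Finset.sum_apply]
    refine Finset.sum_congr rfl fun a _ => ?_
    rw [Pi.smul_apply, smul_eq_mul, hM, Matrix.transpose_apply, LinearMap.toMatrix'_apply]
    have harg : (fun j' => if j' = a then (1 : Fq) else 0)
        = (fun j' => if a = j' then (1 : Fq) else 0) := by
      funext b; simp [eq_comm]
    rw [show (Pi.single a (1 : Fq) : Fin k → Fq) = fun j => if a = j then 1 else 0 from by
      funext b; simp [Pi.single_apply, eq_comm]]
  -- rank of E i * M is the dimension of Φ(Vi)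
  have hmapdim : finrank Fq (Vi.map Φ) = s + 1 := by
    have h1 : Vi.map Φ = Submodule.span Fq (Set.range (E i * M)) := by
      rw [hVi, Submodule.map_span, hrowsEM]
      exact congrArg (Submodule.span Fq) (Set.range_comp (g := Φ) (f := fun r => E i r)).symm
    rw [h1]; have := Matrix.rank_eq_finrank_span_row (E i * M); rw [hi] at this; exact this.symm
  -- Vi has dimension at most s+1
  have hVile : finrank Fq Vi ≤ s + 1 := by
    have h := finrank_span_le_card (R := Fq) (Set.range (E i))
    calc finrank Fq Vi ≤ (Set.range (E i)).toFinset.card := h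
      _ ≤ Fintype.card (Fin (s + 1)) := by
          exact (Set.toFinset_card _).trans_le
            (by convert Fintype.card_range_le (fun r => E i r))
      _ = s + 1 := Fintype.card_fin _
  -- Φ restricted to Vi is injective
  have hinj : Vi ⊓ LinearMap.ker Φ = ⊥ := by
    by_contra hne
    have hdr : finrank Fq (Vi.map Φ) + finrank Fq (Vi ⊓ LinearMap.ker Φ : Submodule Fq _)
        = finrank Fq Vi := by
      have hrn := LinearMap.finrank_range_add_finrank_ker (Φ.domRestrict Vi)
      have e1 : finrank Fq (LinearMap.range (Φ.domRestrict Vi)) = finrank Fq (Vi.map Φ) := by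
        rw [LinearMap.range_domRestrict]
      have hkr : LinearMap.ker (Φ.domRestrict Vi)
          = (Vi ⊓ LinearMap.ker Φ).comap Vi.subtype := by
        ext x
        simp [LinearMap.mem_ker, Submodule.mem_comap, x.2]
      have e2 : finrank Fq (LinearMap.ker (Φ.domRestrict Vi))
          = finrank Fq (Vi ⊓ LinearMap.ker Φ : Submodule Fq _) :=
        ((LinearEquiv.ofEq _ _ hkr).trans
          (Submodule.comapSubtypeEquivOfLe inf_le_left)).finrank_eq
      omega
    have hpos : 0 < finrank Fq (Vi ⊓ LinearMap.ker Φ : Submodule Fq _) := by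
      exact Module.finrank_pos_iff.mpr (Submodule.nontrivial_iff_ne_bot.mpr hne)
    omega
  -- hence Vi ⊓ H = ⊥, and by hle, Vi ⊓ L = ⊥
  have hViL : Vi ⊓ L = ⊥ := by
    rw [← le_bot_iff, ← hinj]
    intro x hx
    exact ⟨hx.1, by rw [hker]; exact hle hx⟩
  -- dimension count: finrank (Vi ⊔ L) = finrank Vi + finrank L > k
  have hVidim : finrank Fq Vi = s + 1 := by
    have hge : s + 1 ≤ finrank Fq Vi := by
      have := Submodule.finrank_map_le Φ Vi
      omega
    omega
  have hsum := Submodule.finrank_sup_add_finrank_inf_eq Vi L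
  rw [hViL, hVidim, hL] at hsum
  have hle2 : finrank Fq (Vi ⊔ L : Submodule Fq _) ≤ finrank Fq (Fin k → Fq) :=
    Submodule.finrank_le _
  rw [finrank_pi] at hle2
  simp only [Fintype.card_fin, finrank_bot] at hsum hle2
  omega
end
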